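/- arXiv:1111.5306 — 2 statements merged into one kernel-verified Lean document; each statement's English description precedes it below -/
import Mathlib

section
/- Let c s : ℝ with 0 ≤ s < c ≤ 1 and set δ = c − s. Suppose p ≤ 1/2 − δ/2. Then p + 4p(1−p)² ≤ (1/2)(1 − δ)(1 + (1 + δ)²) < 1. -/
/-- Soundness bound: if 0 ≤ s < c ≤ 1, δ = c − s, 0 ≤ p ≤ 1/2 − δ/2, then
p + 4p(1−p)² ≤ (1/2)(1−δ)(1+(1+δ)²) < 1. -/
theorem stmt_15 (c s p : ℝ) (hs : 0 ≤ s) (hsc : s < c) (hc : c ≤ 1)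
    (hp0 : 0 ≤ p) (hp : p ≤ 1 / 2 - (c - s) / 2) :
    p + 4 * p * (1 - p) ^ 2 ≤ (1 / 2) * (1 - (c - s)) * (1 + (1 + (c - s)) ^ 2) ∧
      (1 / 2) * (1 - (c - s)) * (1 + (1 + (c - s)) ^ 2) < 1 := by
  obtain ⟨δ, hδ, h1, h2, hp'⟩ : ∃ δ, δ = c - s ∧ 0 < δ ∧ δ ≤ 1 ∧ p ≤ 1/2 - δ/2 :=
    ⟨c - s, rfl, by linarith, by linarith, hp⟩
  rw [← hδ]
  have hq : p ≤ 1 / 2 := by linarith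
  constructor
  · nlinarith [sq_nonneg (1 / 2 - δ / 2 - p), mul_nonneg hp0 (sub_nonneg.2 hq),
      sq_nonneg p, sq_nonneg (1 - p), mul_nonneg (mul_nonneg hp0 hp0) hp0,
      mul_nonneg (sub_nonneg.2 hp') (sub_nonneg.2 hq), sq_nonneg δ,
      mul_nonneg (mul_nonneg (sub_nonneg.2 hp') (sub_nonneg.2 hp')) hp0,
      mul_nonneg (mul_nonneg (sub_nonneg.2 hp') (sub_nonneg.2 hp')) h1.le]
  · nlinarith [mul_pos (mul_pos h1 h1) (show (0:ℝ) < 1 + δ by linarith)]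
end

section
/- Every complex amplitude of the state obtained by applying a quantum circuit composed of g gates from {Hadamard, Toffoli, NOT} to a computational basis state on n qubits is a real number of the form a/√(2^h) for some integer a and some natural number h ≤ g; consequently the probability of any computational basis measurement outcome is of the form k/2^l for integers k ≥ 0 and l ≤ g. -/
/-- A gate on `n` qubits: Hadamard, Toffoli, or NOT. -/
inductive Gate (n : ℕ) where
  | had (i : Fin n)
  | toff (a b c : Fin n)
  | not (i : Fin n)

/-- The action of a single gate on a state vector in (ℂ²)^⊗n,
represented as an amplitude function on computational basis states. -/
noncomputable def applyGate {n : ℕ} (g : Gate n) (ψ : (Fin n → Bool) → ℂ) : (Fin n → Bool) → ℂ :=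
  match g with
  | .not i => fun x => ψ (Function.update x i (!x i))
  | .toff a b c => fun x => ψ (Function.update x c (xor (x c) (x a && x b)))
  | .had i => fun x =>
      ((Real.sqrt 2)⁻¹ : ℝ) *
        (ψ (Function.update x i false) +
          (if x i then (-1 : ℂ) else 1) * ψ (Function.update x i true))

/-- Running a circuit (a list of gates) on a state. -/
noncomputable def runCircuit {n : ℕ} (C : List (Gate n)) (ψ : (Fin n → Bool) → ℂ) :
    (Fin n → Bool) → ℂ :=
  C.foldl (fun s g => applyGate g s) ψ

/-- The computational basis state |b⟩. -/
def basisState {n : ℕ} (b : Fin n → Bool) : (Fin n → Bool) → ℂ :=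
  fun x => if x = b then 1 else 0

lemma sqrt_pow_pos (h : ℕ) : 0 < Real.sqrt (2 ^ h) :=
  Real.sqrt_pos.mpr (by positivity)

lemma gate_step {n : ℕ} (g : Gate n) (ψ : (Fin n → Bool) → ℂ) (h : ℕ)
    (hψ : ∀ x, ∃ a : ℤ, ψ x = (((a : ℝ) / Real.sqrt (2 ^ h) : ℝ) : ℂ)) :
    ∃ h' ≤ h + 1, ∀ x, ∃ a : ℤ,
      applyGate g ψ x = (((a : ℝ) / Real.sqrt (2 ^ h') : ℝ) : ℂ) := by
  cases g with
  | not i => exact ⟨h, Nat.le_succ h, fun x => hψ _⟩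
  | toff a b c => exact ⟨h, Nat.le_succ h, fun x => hψ _⟩
  | had i =>
      refine ⟨h + 1, le_rfl, fun x => ?_⟩
      obtain ⟨a0, ha0⟩ := hψ (Function.update x i false)
      obtain ⟨a1, ha1⟩ := hψ (Function.update x i true)
      have h2 : (Real.sqrt 2 : ℂ) ≠ 0 := by
        norm_cast; exact (Real.sqrt_pos.mpr two_pos).ne'
      have h3 : (Real.sqrt (2 ^ h) : ℂ) ≠ 0 :=
        Complex.ofReal_ne_zero.mpr (sqrt_pow_pos h).ne'
      have hs : Real.sqrt (2 ^ (h+1)) = Real.sqrt 2 * Real.sqrt (2 ^ h) := by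
        rw [pow_succ, mul_comm, Real.sqrt_mul (by positivity)]
      refine ⟨if x i then a0 - a1 else a0 + a1, ?_⟩
      simp only [applyGate, ha0, ha1]
      by_cases hx : x i <;> simp only [hx, if_true, if_false] <;>
        · push_cast [hs]
          field_simp
          try ring

lemma circuit_step {n : ℕ} (C : List (Gate n)) :
    ∀ (ψ : (Fin n → Bool) → ℂ) (m : ℕ),
      (∃ h ≤ m, ∀ x, ∃ a : ℤ, ψ x = (((a : ℝ) / Real.sqrt (2 ^ h) : ℝ) : ℂ)) →
      ∃ h ≤ m + C.length, ∀ x, ∃ a : ℤ,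
        runCircuit C ψ x = (((a : ℝ) / Real.sqrt (2 ^ h) : ℝ) : ℂ) := by
  induction C with
  | nil => intro ψ m hψ; simpa [runCircuit] using hψ
  | cons g C ih =>
      intro ψ m ⟨h, hm, hψ⟩
      obtain ⟨h', hm', hψ'⟩ := gate_step g ψ h hψ
      have := ih (applyGate g ψ) (m + 1) ⟨h', hm'.trans (by omega), hψ'⟩
      obtain ⟨h'', hm'', hψ''⟩ := this
      exact ⟨h'', by simpa [List.length_cons] using hm''.trans (by omega), hψ''⟩

/-- Every amplitude of the state obtained by applying a {Hadamard, Toffoli, NOT} circuit of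
g gates to a computational basis state is a real number of the form a/√(2^h) with a : ℤ and
h ≤ g; consequently every measurement probability is of the form k/2^l with k ≥ 0, l ≤ g. -/
theorem stmt_16 {n : ℕ} (C : List (Gate n)) (b x : Fin n → Bool) :
    (∃ (a : ℤ) (h : ℕ), h ≤ C.length ∧
        runCircuit C (basisState b) x = (((a : ℝ) / Real.sqrt (2 ^ h) : ℝ) : ℂ)) ∧
      (∃ (k l : ℕ), l ≤ C.length ∧
        ‖runCircuit C (basisState b) x‖ ^ 2 = (k : ℝ) / 2 ^ l) := by
  have hbasis : ∃ h ≤ 0, ∀ y, ∃ a : ℤ,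
      basisState b y = (((a : ℝ) / Real.sqrt (2 ^ h) : ℝ) : ℂ) := by
    refine ⟨0, le_rfl, fun y => ?_⟩
    by_cases hy : y = b
    · exact ⟨1, by simp [basisState, hy]⟩
    · exact ⟨0, by simp [basisState, hy]⟩
  obtain ⟨h, hm, hψ⟩ := circuit_step C (basisState b) 0 hbasis
  rw [zero_add] at hm
  obtain ⟨a, ha⟩ := hψ x
  constructor
  · exact ⟨a, h, hm, ha⟩
  · refine ⟨a.natAbs ^ 2, h, hm, ?_⟩
    rw [ha, Complex.norm_real, Real.norm_eq_abs, sq_abs, div_pow, Real.sq_sqrt (by positivity)]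
    push_cast [Int.natAbs_sq]
    ring_nf
    rw [Nat.cast_natAbs]
    push_cast
    rw [sq_abs]
    ring
end
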